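/- Stability of the merged multi-element advection scheme with artificial dissipation (Propositions 4 and 7): let P = P^L ⊕ₘ P^R, Q = Q^L ⊕ₘ Q^R and K = K^L ⊕ₘ K^R be the merged (2p+1)×(2p+1) matrices. If U : ℝ → ℝ^{2p+1} is differentiable and satisfies P U′(t) + a Q U(t) + a K U(t) = −a·e₀·U₀(t) for all t ≥ 0 (SAT inflow penalty σ₀ = −1), then the energy t ↦ U(t)ᵀ P U(t) is nonincreasing on [0, ∞). -/

import Mathlib

open Matrix

/-- The boundary matrix `B⁽ⁿ⁾`: `(0,0)` entry `−1`, `(n,n)` entry `1`, all other entries `0`. -/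
def Bmat (n : ℕ) : Matrix (Fin (n+1)) (Fin (n+1)) ℝ :=
  Matrix.of fun i j =>
    if i = j ∧ i = Fin.last n then 1 else if i = j ∧ i = 0 then -1 else 0

/-- The merged `(2p+1)×(2p+1)` matrix `A = Aᴸ ⊕ₘ Aᴿ` built from two `(p+1)×(p+1)` element
matrices sharing the interface node `p`. -/
def merge {p : ℕ} (AL AR : Matrix (Fin (p+1)) (Fin (p+1)) ℝ) :
    Matrix (Fin (2*p+1)) (Fin (2*p+1)) ℝ :=
  Matrix.of fun i j =>
    (if h : (i : ℕ) ≤ p ∧ (j : ℕ) ≤ p then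
        AL ⟨i, by omega⟩ ⟨j, by omega⟩ else 0)
    + (if h : p ≤ (i : ℕ) ∧ p ≤ (j : ℕ) then
        AR ⟨(i : ℕ) - p, by have := i.isLt; omega⟩ ⟨(j : ℕ) - p, by have := j.isLt; omega⟩
      else 0)

lemma quad_expand {n : ℕ} (M : Matrix (Fin n) (Fin n) ℝ) (v w : Fin n → ℝ) :
    v ⬝ᵥ M.mulVec w = ∑ i, ∑ j, v i * (M i j * w j) := by
  simp [dotProduct, mulVec, Finset.mul_sum]

lemma sum_left {n : ℕ} (f : Fin (2*n+1) → ℝ)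
    (hf : ∀ i : Fin (2*n+1), n < (i:ℕ) → f i = 0) :
    ∑ i, f i = ∑ i : Fin (n+1), f ⟨i, by omega⟩ := by
  classical
  let e : Fin (n+1) ↪ Fin (2*n+1) :=
    ⟨fun i => ⟨i, by omega⟩, by
      intro a b h; simp only [Fin.mk.injEq] at h; exact Fin.ext h⟩
  have h1 : ∑ i, f i = ∑ x ∈ Finset.univ.map e, f x := by
    refine (Finset.sum_subset (Finset.subset_univ _) ?_).symm
    intro x _ hx
    apply hf
    by_contra h
    push_neg at h
    exact hx (Finset.mem_map.mpr ⟨⟨x, by omega⟩, Finset.mem_univ _, Fin.ext rfl⟩)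
  rw [h1, Finset.sum_map]
  rfl

lemma sum_right {n : ℕ} (f : Fin (2*n+1) → ℝ)
    (hf : ∀ i : Fin (2*n+1), (i:ℕ) < n → f i = 0) :
    ∑ i, f i = ∑ i : Fin (n+1), f ⟨(i:ℕ) + n, by have := i.isLt; omega⟩ := by
  classical
  let e : Fin (n+1) ↪ Fin (2*n+1) :=
    ⟨fun i => ⟨(i:ℕ) + n, by have := i.isLt; omega⟩, by
      intro a b h; simp only [Fin.mk.injEq] at h; exact Fin.ext (by omega)⟩
  have h1 : ∑ i, f i = ∑ x ∈ Finset.univ.map e, f x := by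
    refine (Finset.sum_subset (Finset.subset_univ _) ?_).symm
    intro x _ hx
    apply hf
    by_contra h
    push_neg at h
    exact hx (Finset.mem_map.mpr ⟨⟨(x:ℕ) - n, by have := x.isLt; omega⟩, Finset.mem_univ _,
      Fin.ext (show ((x:ℕ) - n) + n = (x:ℕ) by omega)⟩)
  rw [h1, Finset.sum_map]
  rfl

lemma merge_quad {p : ℕ} (AL AR : Matrix (Fin (p+1)) (Fin (p+1)) ℝ)
    (v : Fin (2*p+1) → ℝ) :
    v ⬝ᵥ (merge AL AR).mulVec v
      = (fun i : Fin (p+1) => v ⟨i, by omega⟩) ⬝ᵥ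
          AL.mulVec (fun i : Fin (p+1) => v ⟨i, by omega⟩)
        + (fun i : Fin (p+1) => v ⟨(i:ℕ)+p, by have := i.isLt; omega⟩) ⬝ᵥ
          AR.mulVec (fun i : Fin (p+1) => v ⟨(i:ℕ)+p, by have := i.isLt; omega⟩) := by
  rw [quad_expand, quad_expand, quad_expand]
  have hsplit : (∑ i, ∑ j, v i * (merge AL AR i j * v j))
      = (∑ i : Fin (2*p+1), ∑ j : Fin (2*p+1), v i *
          ((if h : (i:ℕ) ≤ p ∧ (j:ℕ) ≤ p then AL ⟨i, by omega⟩ ⟨j, by omega⟩ else 0) * v j))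
        + (∑ i : Fin (2*p+1), ∑ j : Fin (2*p+1), v i *
          ((if h : p ≤ (i:ℕ) ∧ p ≤ (j:ℕ) then
              AR ⟨(i:ℕ)-p, by have := i.isLt; omega⟩ ⟨(j:ℕ)-p, by have := j.isLt; omega⟩
            else 0) * v j)) := by
    rw [← Finset.sum_add_distrib]
    refine Finset.sum_congr rfl fun i _ => ?_
    rw [← Finset.sum_add_distrib]
    refine Finset.sum_congr rfl fun j _ => ?_
    simp only [merge, of_apply]
    ring
  rw [hsplit]
  congr 1
  · rw [sum_left (n := p)]
    · refine Finset.sum_congr rfl fun i _ => ?_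
      rw [sum_left (n := p)]
      · refine Finset.sum_congr rfl fun j _ => ?_
        rw [dif_pos ⟨show (i:ℕ) ≤ p by omega, show (j:ℕ) ≤ p by omega⟩]
      · intro j hj
        rw [dif_neg (by omega)]
        ring
    · intro i hi
      refine Finset.sum_eq_zero fun j _ => ?_
      rw [dif_neg (by omega)]
      ring
  · rw [sum_right (n := p)]
    · refine Finset.sum_congr rfl fun i _ => ?_
      rw [sum_right (n := p)]
      · refine Finset.sum_congr rfl fun j _ => ?_
        rw [dif_pos ⟨show p ≤ (i:ℕ)+p by omega, show p ≤ (j:ℕ)+p by omega⟩]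
        simp
      · intro j hj
        rw [dif_neg (by omega)]
        ring
    · intro i hi
      refine Finset.sum_eq_zero fun j _ => ?_
      rw [dif_neg (by omega)]
      ring

lemma merge_transpose {p : ℕ} (AL AR : Matrix (Fin (p+1)) (Fin (p+1)) ℝ) :
    (merge AL AR)ᵀ = merge ALᵀ ARᵀ := by
  ext i j
  simp only [transpose_apply, merge, of_apply]
  congr 1
  · by_cases h : (i:ℕ) ≤ p ∧ (j:ℕ) ≤ p
    · rw [dif_pos ⟨h.2, h.1⟩, dif_pos h]
    · rw [dif_neg (fun hc => h ⟨hc.2, hc.1⟩), dif_neg h]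
  · by_cases h : p ≤ (i:ℕ) ∧ p ≤ (j:ℕ)
    · rw [dif_pos ⟨h.2, h.1⟩, dif_pos h]
    · rw [dif_neg (fun hc => h ⟨hc.2, hc.1⟩), dif_neg h]

lemma merge_add {p : ℕ} (AL AR CL CR : Matrix (Fin (p+1)) (Fin (p+1)) ℝ) :
    merge AL AR + merge CL CR = merge (AL + CL) (AR + CR) := by
  ext i j
  simp only [Matrix.add_apply, merge, of_apply]
  split_ifs <;> first | (simp only [Matrix.add_apply]; ring) | ring

lemma quadB {p : ℕ} (hp : 1 ≤ p) (v : Fin (p+1) → ℝ) :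
    v ⬝ᵥ (Bmat p).mulVec v = v (Fin.last p) * v (Fin.last p) - v 0 * v 0 := by
  have hne : (Fin.last p) ≠ (0 : Fin (p+1)) := by
    simp only [Ne, Fin.ext_iff, Fin.val_last, Fin.val_zero]
    omega
  rw [quad_expand]
  have hterm : ∀ i j : Fin (p+1), v i * (Bmat p i j * v j)
      = (if j = i then (if i = Fin.last p then v i * v j
          else if i = 0 then -(v i * v j) else 0) else 0) := by
    intro i j
    simp only [Bmat, of_apply]
    by_cases hij : i = j
    · subst hij
      simp only [if_pos rfl, true_and]
      by_cases h1 : i = Fin.last p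
      · simp [h1]
      · by_cases h0 : i = 0 <;> simp [h1, h0]
    · have hji : ¬ j = i := fun h => hij h.symm
      simp [hij, hji]
  simp only [hterm]
  simp only [Finset.sum_ite_eq', Finset.mem_univ, if_true]
  have hterm2 : ∀ i : Fin (p+1),
      (if i = Fin.last p then v i * v i else if i = 0 then -(v i * v i) else 0)
      = (if i = Fin.last p then v (Fin.last p) * v (Fin.last p) else 0)
        + (if i = 0 then -(v 0 * v 0) else 0) := by
    intro i
    by_cases h1 : i = Fin.last p
    · subst h1; simp [hne]
    · by_cases h0 : i = 0
      · subst h0; simp [h1]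
      · simp [h1, h0]
  simp only [hterm2]
  rw [Finset.sum_add_distrib]
  simp only [Finset.sum_ite_eq', Finset.mem_univ, if_true]
  ring

lemma hasDeriv_quad {n : ℕ} (M : Matrix (Fin n) (Fin n) ℝ) (U : ℝ → Fin n → ℝ)
    (hU : Differentiable ℝ U) (t : ℝ) :
    HasDerivAt (fun s => U s ⬝ᵥ M.mulVec (U s))
      (deriv U t ⬝ᵥ M.mulVec (U t) + U t ⬝ᵥ M.mulVec (deriv U t)) t := by
  have h : ∀ i : Fin n, HasDerivAt (fun s => U s i) (deriv U t i) t :=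
    fun i => (hasDerivAt_pi.mp (hU t).hasDerivAt) i
  have key : HasDerivAt (fun s => ∑ i, ∑ j, U s i * (M i j * U s j))
      (∑ i, ∑ j, (deriv U t i * (M i j * U t j) + U t i * (M i j * deriv U t j))) t := by
    refine HasDerivAt.fun_sum fun i _ => HasDerivAt.fun_sum fun j _ => ?_
    exact (h i).mul ((h j).const_mul (M i j))
  have hfun : (fun s => U s ⬝ᵥ M.mulVec (U s))
      = fun s => ∑ i, ∑ j, U s i * (M i j * U s j) := by
    funext s; rw [quad_expand]
  have hval : (∑ i, ∑ j, (deriv U t i * (M i j * U t j) + U t i * (M i j * deriv U t j)))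
      = deriv U t ⬝ᵥ M.mulVec (U t) + U t ⬝ᵥ M.mulVec (deriv U t) := by
    rw [quad_expand, quad_expand, ← Finset.sum_add_distrib]
    exact Finset.sum_congr rfl fun i _ => by rw [← Finset.sum_add_distrib]
  rw [hfun, ← hval]
  exact key

lemma dot_transpose {n : ℕ} (M : Matrix (Fin n) (Fin n) ℝ) (v w : Fin n → ℝ) :
    v ⬝ᵥ M.mulVec w = (Mᵀ.mulVec v) ⬝ᵥ w := by
  rw [Matrix.dotProduct_mulVec, ← Matrix.mulVec_transpose]

set_option maxHeartbeats 1000000 in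
lemma quad_mergeBB {p : ℕ} (hp : 1 ≤ p) (v : Fin (2*p+1) → ℝ) :
    v ⬝ᵥ (merge (Bmat p) (Bmat p)).mulVec v
      = v ⟨2*p, by omega⟩ * v ⟨2*p, by omega⟩ - v 0 * v 0 := by
  rw [merge_quad, quadB hp, quadB hp]
  have h1 : (⟨((Fin.last p : Fin (p+1)) : ℕ), by omega⟩ : Fin (2*p+1))
      = ⟨p, by omega⟩ := Fin.ext (by simp)
  have h2 : (⟨((0 : Fin (p+1)) : ℕ), by omega⟩ : Fin (2*p+1)) = 0 := Fin.ext (by simp)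
  have h3 : (⟨((Fin.last p : Fin (p+1)) : ℕ) + p, by omega⟩ : Fin (2*p+1))
      = ⟨2*p, by omega⟩ := Fin.ext (by simp; omega)
  have h4 : (⟨((0 : Fin (p+1)) : ℕ) + p, by omega⟩ : Fin (2*p+1))
      = ⟨p, by omega⟩ := Fin.ext (by simp)
  rw [h1, h2, h3, h4]
  ring

/-- **Propositions 4 and 7.** Stability of the merged multi-element advection
scheme with artificial dissipation: with `P = Pᴸ ⊕ₘ Pᴿ`, `Q = Qᴸ ⊕ₘ Qᴿ`, `K = Kᴸ ⊕ₘ Kᴿ`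
(`Pᴸ, Pᴿ` diagonal positive, `Qᴸ, Qᴿ` SBP, `Kᴸ, Kᴿ` positive semidefinite), if
`P U′ + a Q U + a K U = −a U₀ e₀`, then `t ↦ U(t)ᵀ P U(t)` is nonincreasing on `[0,∞)`. -/
theorem stmt9 (p : ℕ) (hp : 1 ≤ p) (a : ℝ) (ha : 0 ≤ a)
    (dL dR : Fin (p+1) → ℝ) (hdL : ∀ i, 0 < dL i) (hdR : ∀ i, 0 < dR i)
    (PL PR QL QR KL KR : Matrix (Fin (p+1)) (Fin (p+1)) ℝ)
    (hPL : PL = Matrix.diagonal dL) (hPR : PR = Matrix.diagonal dR)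
    (hQL : QL + QLᵀ = Bmat p) (hQR : QR + QRᵀ = Bmat p)
    (hKL : ∀ v : Fin (p+1) → ℝ, 0 ≤ v ⬝ᵥ KL.mulVec v)
    (hKR : ∀ v : Fin (p+1) → ℝ, 0 ≤ v ⬝ᵥ KR.mulVec v)
    (P Q K : Matrix (Fin (2*p+1)) (Fin (2*p+1)) ℝ)
    (hP : P = merge PL PR) (hQ : Q = merge QL QR) (hK : K = merge KL KR)
    (U : ℝ → Fin (2*p+1) → ℝ) (hU : Differentiable ℝ U)
    (hode : ∀ t : ℝ, 0 ≤ t →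
      P.mulVec (deriv U t) + a • Q.mulVec (U t) + a • K.mulVec (U t)
        = (-(a * U t 0)) • (Pi.single 0 1 : Fin (2*p+1) → ℝ)) :
    AntitoneOn (fun t => U t ⬝ᵥ P.mulVec (U t)) (Set.Ici (0:ℝ)) := by
  have hPsym : Pᵀ = P := by
    rw [hP, merge_transpose, hPL, hPR, Matrix.diagonal_transpose, Matrix.diagonal_transpose]
  have hdiff : Differentiable ℝ (fun t => U t ⬝ᵥ P.mulVec (U t)) :=
    fun t => (hasDeriv_quad P U hU t).differentiableAt
  apply antitoneOn_of_deriv_nonpos (convex_Ici 0) hdiff.continuous.continuousOn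
    hdiff.differentiableOn
  intro t ht
  rw [interior_Ici, Set.mem_Ioi] at ht
  have ht0 : (0:ℝ) ≤ t := le_of_lt ht
  set u := U t with hu
  set u' := deriv U t with hu'
  have hderiv : deriv (fun s => U s ⬝ᵥ P.mulVec (U s)) t
      = u' ⬝ᵥ P.mulVec u + u ⬝ᵥ P.mulVec u' := (hasDeriv_quad P U hU t).deriv
  rw [hderiv]
  have hsym : u' ⬝ᵥ P.mulVec u = u ⬝ᵥ P.mulVec u' := by
    rw [dot_transpose P u u', hPsym, dotProduct_comm]
  rw [hsym]
  -- use the ODE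
  have hPu' : P.mulVec u' = (-(a * u 0)) • (Pi.single 0 1 : Fin (2*p+1) → ℝ)
      - a • Q.mulVec u - a • K.mulVec u := by
    rw [← hode t ht0]
    abel
  rw [hPu']
  have hexp : u ⬝ᵥ ((-(a * u 0)) • (Pi.single 0 1 : Fin (2*p+1) → ℝ)
      - a • Q.mulVec u - a • K.mulVec u)
      = -(a * u 0) * u 0 - a * (u ⬝ᵥ Q.mulVec u) - a * (u ⬝ᵥ K.mulVec u) := by
    rw [dotProduct_sub, dotProduct_sub, dotProduct_smul, dotProduct_smul, dotProduct_smul,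
      dotProduct_single]
    simp [smul_eq_mul]
  rw [hexp]
  -- Q contribution
  have hQT : u ⬝ᵥ Qᵀ.mulVec u = u ⬝ᵥ Q.mulVec u := by
    rw [dot_transpose, transpose_transpose, dotProduct_comm]
  have hQsum : Q + Qᵀ = merge (Bmat p) (Bmat p) := by
    rw [hQ, merge_transpose, merge_add, hQL, hQR]
  have h2Q : 2 * (u ⬝ᵥ Q.mulVec u)
      = u ⟨2*p, by omega⟩ * u ⟨2*p, by omega⟩ - u 0 * u 0 := by
    have : u ⬝ᵥ (Q + Qᵀ).mulVec u
        = u ⟨2*p, by omega⟩ * u ⟨2*p, by omega⟩ - u 0 * u 0 := by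
      rw [hQsum]; exact quad_mergeBB hp u
    rw [Matrix.add_mulVec, dotProduct_add, hQT] at this
    linarith
  -- K contribution
  have hKpos : 0 ≤ u ⬝ᵥ K.mulVec u := by
    rw [hK, merge_quad]
    exact add_nonneg (hKL _) (hKR _)
  nlinarith [sq_nonneg (u ⟨2*p, by omega⟩), sq_nonneg (u 0), mul_nonneg ha hKpos,
    sq_nonneg (u 0 + u ⟨2*p, by omega⟩)]
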